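/- Let h(x,y) = x(2 - 6y + y² + 4x - x² + 2(1+y)log y - 2 log x)/2 for 0 < x ≤ y ≤ 1, extended by 0 when x = 0. Then h attains its unique global maximum on T = {(x,y) : 0 ≤ x ≤ y ≤ 1} at a point (α,β) with β the unique solution in (0,1) of -2 + 1/β + β + log β = 0 and α the unique solution in (0,β) of 1 - 1/β - 2β - β²/2 + 4α - 3α²/2 - log α = 0; numerically β ≈ 0.39422, α ≈ 0.17248, and h(α,β) ≈ 0.11811. -/

import Mathlib

open Real Set

noncomputable def gAux (y : ℝ) : ℝ := -2 + 1 / y + y + Real.log y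
noncomputable def gamAux : ℝ := (Real.sqrt 5 - 1) / 2
noncomputable def phiAux (b x : ℝ) : ℝ :=
  1 - 1 / b - 2 * b - b ^ 2 / 2 + 4 * x - 3 * x ^ 2 / 2 - Real.log x
noncomputable def Haux (x y : ℝ) : ℝ :=
  x * (2 - 6 * y + y ^ 2 + 4 * x - x ^ 2 + 2 * (1 + y) * Real.log y - 2 * Real.log x) / 2
noncomputable def Daux (x : ℝ) : ℝ := x - x ^ 2 + x ^ 2 * Real.log x
noncomputable def uAux (x : ℝ) : ℝ := 1 - x + 2 * x * Real.log x

set_option linter.unusedSectionVars false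


lemma gAux_hasDeriv {y : ℝ} (hy : 0 < y) :
    HasDerivAt gAux (1 - 1 / y ^ 2 + 1 / y) y := by
  have h1 : HasDerivAt (fun t : ℝ => 1 / t) (-(1 / y ^ 2)) y := by
    simpa [one_div] using hasDerivAt_inv hy.ne'
  have h2 := Real.hasDerivAt_log hy.ne'
  have h3 := (((hasDerivAt_const y (-2:ℝ)).add h1).add (hasDerivAt_id y)).add h2
  unfold gAux
  refine h3.congr_deriv ?_
  ring


lemma gam_sq : gamAux ^ 2 + gamAux - 1 = 0 := by
  have : Real.sqrt 5 ^ 2 = 5 := Real.sq_sqrt (by norm_num)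
  unfold gamAux; nlinarith [this]

lemma gam_gt : (0.6 : ℝ) < gamAux := by
  have : (2.2 : ℝ) < Real.sqrt 5 := by
    have := Real.lt_sqrt (x := (2.2:ℝ)) (y := 5) (by norm_num)
    rw [this]; norm_num
  unfold gamAux; linarith

lemma gam_lt : gamAux < 1 := by
  have : Real.sqrt 5 < 3 := by
    have h : Real.sqrt 5 < Real.sqrt 9 := Real.sqrt_lt_sqrt (by norm_num) (by norm_num)
    have h9 : Real.sqrt 9 = 3 := by
      rw [show (9:ℝ) = 3^2 by norm_num, Real.sqrt_sq (by norm_num)]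
    linarith
  unfold gamAux; linarith

lemma gAux_anti : StrictAntiOn gAux (Ioc 0 gamAux) := by
  apply strictAntiOn_of_deriv_neg (convex_Ioc _ _)
  · intro x hx; exact (gAux_hasDeriv hx.1).continuousAt.continuousWithinAt
  · intro x hx
    rw [interior_Ioc] at hx
    rw [(gAux_hasDeriv hx.1).deriv]
    have h1 : x ^ 2 + x - 1 < 0 := by nlinarith [gam_sq, gam_gt, hx.1, hx.2]
    have hx2 : (0:ℝ) < x ^ 2 := pow_pos hx.1 2
    have hne := hx.1.ne'
    have : (1 - 1 / x ^ 2 + 1 / x) = (x ^ 2 + x - 1) / x ^ 2 := by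
      field_simp; ring
    rw [this]
    exact div_neg_of_neg_of_pos h1 hx2

lemma gAux_mono : StrictMonoOn gAux (Icc gamAux 1) := by
  apply strictMonoOn_of_deriv_pos (convex_Icc _ _)
  · intro x hx
    have hx0 : 0 < x := lt_of_lt_of_le (by linarith [gam_gt]) hx.1
    exact (gAux_hasDeriv hx0).continuousAt.continuousWithinAt
  · intro x hx
    rw [interior_Icc] at hx
    have hx0 : 0 < x := lt_of_lt_of_le (by linarith [gam_gt]) hx.1.le
    rw [(gAux_hasDeriv hx0).deriv]
    have h1 : 0 < x ^ 2 + x - 1 := by nlinarith [gam_sq, gam_gt, hx.1, hx.2]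
    have hx2 : (0:ℝ) < x ^ 2 := pow_pos hx0 2
    have hne := hx0.ne'
    have : (1 - 1 / x ^ 2 + 1 / x) = (x ^ 2 + x - 1) / x ^ 2 := by
      field_simp; ring
    rw [this]
    positivity

lemma gAux_one : gAux 1 = 0 := by simp [gAux]; norm_num

section
lemma log3_lt : Real.log 3 < 4 / 3 := by
  have he : (2.7 : ℝ) < Real.exp 1 := by
    have := Real.exp_one_gt_d9; linarith
  have h2 : Real.log (3 / Real.exp 1) ≤ 3 / Real.exp 1 - 1 :=
    Real.log_le_sub_one_of_pos (by positivity)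
  rw [Real.log_div (by norm_num) (Real.exp_ne_zero 1), Real.log_exp] at h2
  have h3 : 3 / Real.exp 1 < 3 / 2.7 := by
    apply div_lt_div_of_pos_left (by norm_num) (by norm_num) he
  linarith

lemma g_third_pos : 0 < gAux (1/3) := by
  have hl : Real.log (1/3 : ℝ) = -Real.log 3 := by
    rw [one_div, Real.log_inv]
  unfold gAux
  rw [hl]
  have := log3_lt
  norm_num
  linarith

lemma g_46_neg : gAux (23/50) < 0 := by
  have hs : Real.sqrt (23/50) < 0.679 := by
    rw [show (0.679:ℝ) = Real.sqrt (0.679^2) from (Real.sqrt_sq (by norm_num)).symm]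
    apply Real.sqrt_lt_sqrt (by norm_num)
    norm_num
  have hs0 : 0 < Real.sqrt (23/50) := Real.sqrt_pos.mpr (by norm_num)
  have h1 : Real.log (Real.sqrt (23/50)) ≤ Real.sqrt (23/50) - 1 :=
    Real.log_le_sub_one_of_pos hs0
  have h2 : Real.log (Real.sqrt (23/50)) = Real.log (23/50) / 2 :=
    Real.log_sqrt (by norm_num)
  unfold gAux
  rw [h2] at h1
  norm_num at h1 hs ⊢
  linarith
end

lemma beta_exists : ∃ b : ℝ, 1/3 < b ∧ b < 23/50 ∧ gAux b = 0 := by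
  have hc : ContinuousOn gAux (Icc (1/3 : ℝ) (23/50)) := by
    intro x hx
    exact (gAux_hasDeriv (lt_of_lt_of_le (by norm_num) hx.1)).continuousAt.continuousWithinAt
  have := intermediate_value_Icc' (by norm_num : (1/3:ℝ) ≤ 23/50) hc
  have h0 : (0:ℝ) ∈ Icc (gAux (23/50)) (gAux (1/3)) :=
    ⟨g_46_neg.le, g_third_pos.le⟩
  obtain ⟨b, hb, hgb⟩ := this h0
  refine ⟨b, lt_of_le_of_ne hb.1 ?_, lt_of_le_of_ne hb.2 ?_, hgb⟩
  · rintro rfl; exact g_third_pos.ne (hgb.symm)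
  · rintro rfl; exact g_46_neg.ne hgb

lemma phi_hasDeriv (b : ℝ) {x : ℝ} (hx : 0 < x) :
    HasDerivAt (phiAux b) (4 - 3 * x - 1 / x) x := by
  have h2 := Real.hasDerivAt_log hx.ne'
  have c := hasDerivAt_const x (1 - 1/b - 2*b - b^2/2 : ℝ)
  have h4 : HasDerivAt (fun t : ℝ => 4 * t) 4 x := by
    simpa using (hasDerivAt_id x).const_mul (4:ℝ)
  have h5 : HasDerivAt (fun t : ℝ => 3 * t ^ 2 / 2) (3 * (2 * x) / 2) x := by
    exact (((hasDerivAt_pow 2 x).const_mul 3).div_const 2).congr_deriv (by push_cast; ring)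
  have h6 := ((c.add h4).sub h5).sub h2
  unfold phiAux
  refine h6.congr_deriv ?_
  field_simp; ring

lemma phi_anti (b : ℝ) : StrictAntiOn (phiAux b) (Ioc 0 (1/3)) := by
  apply strictAntiOn_of_deriv_neg (convex_Ioc _ _)
  · intro x hx; exact (phi_hasDeriv b hx.1).continuousAt.continuousWithinAt
  · intro x hx
    rw [interior_Ioc] at hx
    rw [(phi_hasDeriv b hx.1).deriv]
    have hne := hx.1.ne'
    have : (4 - 3 * x - 1 / x) = -((3*x - 1) * (x - 1)) / x := by field_simp; ring
    rw [this]
    apply div_neg_of_neg_of_pos _ hx.1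
    nlinarith [hx.1, hx.2]

lemma phi_mono (b : ℝ) : StrictMonoOn (phiAux b) (Icc (1/3) 1) := by
  apply strictMonoOn_of_deriv_pos (convex_Icc _ _)
  · intro x hx
    exact (phi_hasDeriv b (lt_of_lt_of_le (by norm_num) hx.1)).continuousAt.continuousWithinAt
  · intro x hx
    rw [interior_Icc] at hx
    have hx0 : (0:ℝ) < x := lt_trans (by norm_num) hx.1
    rw [(phi_hasDeriv b hx0).deriv]
    have hne := hx0.ne'
    have : (4 - 3 * x - 1 / x) = -((3*x - 1) * (x - 1)) / x := by field_simp; ring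
    rw [this]
    apply div_pos _ hx0
    nlinarith [hx.1, hx.2]

section
variable {b : ℝ} (hb1 : 1/3 < b) (hb2 : b < 23/50)
  (hlog : Real.log b = 2 - 1/b - b)

include hb1 hb2 hlog in
lemma phi_b_neg : phiAux b b < 0 := by
  unfold phiAux
  rw [hlog]
  have h1 : (2*b - 1) * (b - 1) > 0 := by nlinarith
  have hbne : b ≠ 0 := by positivity
  have : 1 - 1/b - 2*b - b^2/2 + 4*b - 3*b^2/2 - (2 - 1/b - b) = -1 + 3*b - 2*b^2 := by
    field_simp; ring
  rw [this]; nlinarith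

include hb1 hb2 hlog in
lemma phi_third_neg : phiAux b (1/3) < 0 := by
  have hb0 : (0:ℝ) < b := by linarith
  have h3b : Real.log (3 * b) ≤ 3 * b - 1 := Real.log_le_sub_one_of_pos (by linarith)
  have hsplit : Real.log (3 * b) = Real.log 3 + Real.log b :=
    Real.log_mul (by norm_num) hb0.ne'
  have hl3 : Real.log (1/3 : ℝ) = -Real.log 3 := by rw [one_div, Real.log_inv]
  unfold phiAux
  rw [hl3]
  have : Real.log 3 ≤ 3*b - 1 - Real.log b := by rw [hsplit] at h3b; linarith
  rw [hlog] at this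
  have hbne := hb0.ne'
  have key : 1/b * b = 1 := by field_simp
  nlinarith [this]

include hb1 hb2 in
lemma phi_e4_pos : 0 < phiAux b (Real.exp (-4)) := by
  have hb0 : (0:ℝ) < b := by linarith
  have ha0 : (0:ℝ) < Real.exp (-4) := Real.exp_pos _
  have ha5 : Real.exp (-4) ≤ 1/5 := by
    rw [Real.exp_neg]
    rw [inv_le_comm₀ (Real.exp_pos 4) (by norm_num)]
    calc (1/5 : ℝ)⁻¹ = 5 := by norm_num
    _ ≤ Real.exp 4 := by have := Real.add_one_le_exp (4:ℝ); linarith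
  have hinv : 1/b < 3 := by
    rw [div_lt_iff₀ hb0]; linarith
  unfold phiAux
  rw [Real.log_exp]
  nlinarith [ha0, ha5]
end

lemma Haux_deriv_y (x : ℝ) {y : ℝ} (hy : 0 < y) :
    HasDerivAt (fun t => Haux x t) (x * gAux y) y := by
  have hl : HasDerivAt Real.log y⁻¹ y := Real.hasDerivAt_log hy.ne'
  have d1 : HasDerivAt (fun t : ℝ => 2 - 6 * t) (-6 : ℝ) y := by
    exact ((hasDerivAt_const y (2:ℝ)).sub ((hasDerivAt_id y).const_mul 6)).congr_deriv (by norm_num)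
  have d2 : HasDerivAt (fun t : ℝ => 2 - 6 * t + t ^ 2) (-6 + 2 * y) y := by
    have := d1.add (hasDerivAt_pow 2 y)
    refine this.congr_deriv ?_; push_cast; ring
  have dA : HasDerivAt (fun t : ℝ => 2 * (1 + t) * Real.log t)
      (2 * Real.log y + 2 * (1 + y) * y⁻¹) y := by
    have hB : HasDerivAt (fun t : ℝ => 2 * (1 + t)) 2 y := by
      simpa using ((hasDerivAt_id y).const_add (1:ℝ)).const_mul (2:ℝ)
    have := hB.mul hl
    exact this
  have d5 := ((((d2.add_const (4 * x)).sub_const (x ^ 2)).add dA).sub_const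
      (2 * Real.log x)).const_mul x
  have d6 := d5.div_const 2
  have hfun : (fun t => Haux x t) = fun t =>
      x * (2 - 6 * t + t ^ 2 + 4 * x - x ^ 2 + 2 * (1 + t) * Real.log t - 2 * Real.log x) / 2 := rfl
  rw [hfun]
  refine d6.congr_deriv ?_
  unfold gAux
  field_simp
  ring

lemma Haux_deriv_x (y : ℝ) {x : ℝ} (hx : 0 < x) :
    HasDerivAt (fun t => Haux t y)
      ((2 - 6 * y + y ^ 2 + 2 * (1 + y) * Real.log y - 2 + 8 * x - 3 * x ^ 2
        - 2 * Real.log x) / 2) x := by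
  have hl : HasDerivAt Real.log x⁻¹ x := Real.hasDerivAt_log hx.ne'
  have e1 : HasDerivAt (fun t : ℝ => 2 - 6 * y + y ^ 2 + 4 * t) (4 : ℝ) x := by
    exact ((hasDerivAt_const x (2 - 6 * y + y ^ 2 : ℝ)).add
      ((hasDerivAt_id x).const_mul 4)).congr_deriv (by norm_num)
  have e2 : HasDerivAt (fun t : ℝ => 2 - 6 * y + y ^ 2 + 4 * t - t ^ 2) (4 - 2 * x) x := by
    have := e1.sub (hasDerivAt_pow 2 x)
    refine this.congr_deriv ?_; push_cast; ring
  have e3 := e2.add_const (2 * (1 + y) * Real.log y)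
  have e4 := e3.sub (hl.const_mul 2)
  have e5 := (hasDerivAt_id x).mul e4
  have e6 := e5.div_const 2
  have hfun : (fun t => Haux t y) = fun t =>
      t * (2 - 6 * y + y ^ 2 + 4 * t - t ^ 2 + 2 * (1 + y) * Real.log y - 2 * Real.log t) / 2 := rfl
  rw [hfun]
  refine e6.congr_deriv ?_
  simp only [Pi.sub_apply, Pi.mul_apply, id]
  field_simp
  ring

lemma Haux_deriv_x_beta {b : ℝ} (hb0 : 0 < b) (hlog : Real.log b = 2 - 1/b - b)
    {x : ℝ} (hx : 0 < x) :
    HasDerivAt (fun t => Haux t b) (phiAux b x) x := by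
  have := Haux_deriv_x b hx
  convert this using 1
  unfold phiAux
  rw [hlog]
  have hbne := hb0.ne'
  field_simp
  ring


lemma Haux_diag (x : ℝ) : Haux x x = Daux x := by
  unfold Haux Daux; ring


lemma Daux_hasDeriv {x : ℝ} (hx : 0 < x) : HasDerivAt Daux (uAux x) x := by
  have hl : HasDerivAt Real.log x⁻¹ x := Real.hasDerivAt_log hx.ne'
  have d1 : HasDerivAt (fun t : ℝ => t - t ^ 2) (1 - 2 * x) x := by
    have := (hasDerivAt_id x).sub (hasDerivAt_pow 2 x)
    refine this.congr_deriv ?_; push_cast; ring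
  have d2 : HasDerivAt (fun t : ℝ => t ^ 2 * Real.log t) (2 * x * Real.log x + x ^ 2 * x⁻¹) x := by
    have := (hasDerivAt_pow 2 x).mul hl
    refine this.congr_deriv ?_; push_cast; ring
  have := d1.add d2
  unfold Daux uAux
  refine this.congr_deriv ?_
  field_simp
  ring

lemma uAux_hasDeriv {x : ℝ} (hx : 0 < x) : HasDerivAt uAux (1 + 2 * Real.log x) x := by
  have hl : HasDerivAt Real.log x⁻¹ x := Real.hasDerivAt_log hx.ne'
  have d1 : HasDerivAt (fun t : ℝ => 1 - t) (-1 : ℝ) x := by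
    exact ((hasDerivAt_const x (1:ℝ)).sub (hasDerivAt_id x)).congr_deriv (by norm_num)
  have d2 : HasDerivAt (fun t : ℝ => 2 * t * Real.log t) (2 * Real.log x + 2 * x * x⁻¹) x := by
    have hB : HasDerivAt (fun t : ℝ => 2 * t) (2:ℝ) x := by
      simpa using (hasDerivAt_id x).const_mul (2:ℝ)
    have := hB.mul hl
    exact this
  have := d1.add d2
  unfold uAux
  refine this.congr_deriv ?_
  field_simp
  ring

section
variable {b : ℝ} (hb1 : 1/3 < b) (hb2 : b < 23/50) (hlog : Real.log b = 2 - 1/b - b)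

include hb1 hb2 in
lemma g_pos_on (hgb : gAux b = 0) : ∀ y ∈ Ioo (0:ℝ) b, 0 < gAux y := by
  intro y hy
  have hbg : b ∈ Ioc (0:ℝ) gamAux := ⟨by linarith, by linarith [gam_gt]⟩
  have hyg : y ∈ Ioc (0:ℝ) gamAux := ⟨hy.1, by linarith [hy.2, gam_gt]⟩
  have := gAux_anti hyg hbg hy.2
  rw [hgb] at this; linarith

include hb1 hb2 in
lemma g_neg_on (hgb : gAux b = 0) : ∀ y ∈ Ioo b (1:ℝ), gAux y < 0 := by
  intro y hy
  rcases le_or_gt y gamAux with hc | hc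
  · have hbg : b ∈ Ioc (0:ℝ) gamAux := ⟨by linarith, by linarith [gam_gt]⟩
    have hyg : y ∈ Ioc (0:ℝ) gamAux := ⟨by linarith [hy.1], hc⟩
    have := gAux_anti hbg hyg hy.1
    rw [hgb] at this; linarith
  · have := gAux_mono ⟨hc.le, hy.2.le⟩ ⟨le_refl gamAux |>.trans (by linarith [gam_lt]), le_refl 1⟩ hy.2
    rw [gAux_one] at this; linarith

include hb1 hb2 in
lemma yslice_mono (hgb : gAux b = 0) {x : ℝ} (hx : 0 < x) :
    StrictMonoOn (fun t => Haux x t) (Ioc 0 b) := by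
  apply strictMonoOn_of_deriv_pos (convex_Ioc _ _)
  · intro t ht; exact (Haux_deriv_y x ht.1).continuousAt.continuousWithinAt
  · intro t ht
    rw [interior_Ioc] at ht
    rw [(Haux_deriv_y x ht.1).deriv]
    exact mul_pos hx (g_pos_on hb1 hb2 hgb t ht)

include hb1 hb2 in
lemma yslice_anti (hgb : gAux b = 0) {x : ℝ} (hx : 0 < x) :
    StrictAntiOn (fun t => Haux x t) (Icc b 1) := by
  apply strictAntiOn_of_deriv_neg (convex_Icc _ _)
  · intro t ht
    have : (0:ℝ) < t := lt_of_lt_of_le (by linarith) ht.1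
    exact (Haux_deriv_y x this).continuousAt.continuousWithinAt
  · intro t ht
    rw [interior_Icc] at ht
    rw [(Haux_deriv_y x (by linarith [ht.1] : (0:ℝ) < t)).deriv]
    exact mul_neg_of_pos_of_neg hx (g_neg_on hb1 hb2 hgb t ht)

include hb1 hb2 hlog in
lemma psi_mono {a : ℝ} (ha0 : 0 < a) (ha3 : a ≤ 1/3) (hpa : phiAux b a = 0) :
    StrictMonoOn (fun t => Haux t b) (Ioc 0 a) := by
  have hb0 : (0:ℝ) < b := by linarith
  apply strictMonoOn_of_deriv_pos (convex_Ioc _ _)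
  · intro t ht; exact (Haux_deriv_x_beta hb0 hlog ht.1).continuousAt.continuousWithinAt
  · intro t ht
    rw [interior_Ioc] at ht
    rw [(Haux_deriv_x_beta hb0 hlog ht.1).deriv]
    have := phi_anti b ⟨ht.1, by linarith [ht.2]⟩ ⟨ha0, ha3⟩ ht.2
    rw [hpa] at this; linarith

include hb1 hb2 hlog in
lemma psi_anti {a : ℝ} (ha0 : 0 < a) (ha3 : a ≤ 1/3) (hpa : phiAux b a = 0) :
    StrictAntiOn (fun t => Haux t b) (Icc a b) := by
  have hb0 : (0:ℝ) < b := by linarith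
  apply strictAntiOn_of_deriv_neg (convex_Icc _ _)
  · intro t ht
    exact (Haux_deriv_x_beta hb0 hlog (lt_of_lt_of_le ha0 ht.1)).continuousAt.continuousWithinAt
  · intro t ht
    rw [interior_Icc] at ht
    have ht0 : 0 < t := lt_trans ha0 ht.1
    rw [(Haux_deriv_x_beta hb0 hlog ht0).deriv]
    rcases le_or_gt t (1/3) with hc | hc
    · have := phi_anti b ⟨ha0, ha3⟩ ⟨ht0, hc⟩ ht.1
      rw [hpa] at this; linarith
    · have h1 := phi_mono b ⟨hc.le, by linarith [ht.2]⟩ ⟨le_of_lt hb1, by linarith⟩ ht.2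
      have h2 := phi_b_neg hb1 hb2 hlog
      linarith

lemma exp_half_lt : Real.exp (1/2 : ℝ) < 50/23 := by
  have h : Real.exp (1/2:ℝ) * Real.exp (1/2:ℝ) = Real.exp 1 := by
    rw [← Real.exp_add]; norm_num
  have he := Real.exp_one_lt_d9
  have hpos := Real.exp_pos (1/2 : ℝ)
  nlinarith

include hb2 in
lemma b_lt_s : b < Real.exp (-(1/2) : ℝ) := by
  have h1 := exp_half_lt
  have hpos := Real.exp_pos (1/2 : ℝ)
  have : Real.exp (-(1/2):ℝ) = (Real.exp (1/2:ℝ))⁻¹ := by rw [← Real.exp_neg]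
  rw [this]
  have : (50/23 : ℝ)⁻¹ < (Real.exp (1/2:ℝ))⁻¹ := by
    apply inv_strictAnti₀ hpos h1
  calc b < 23/50 := hb2
  _ = (50/23 : ℝ)⁻¹ := by norm_num
  _ < _ := this

lemma uAux_anti : StrictAntiOn uAux (Ioc 0 (Real.exp (-(1/2):ℝ))) := by
  apply strictAntiOn_of_deriv_neg (convex_Ioc _ _)
  · intro t ht; exact (uAux_hasDeriv ht.1).continuousAt.continuousWithinAt
  · intro t ht
    rw [interior_Ioc] at ht
    rw [(uAux_hasDeriv ht.1).deriv]
    have := Real.log_lt_log ht.1 ht.2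
    rw [Real.log_exp] at this
    linarith

lemma uAux_mono : StrictMonoOn uAux (Icc (Real.exp (-(1/2):ℝ)) 1) := by
  apply strictMonoOn_of_deriv_pos (convex_Icc _ _)
  · intro t ht
    have : (0:ℝ) < t := lt_of_lt_of_le (Real.exp_pos _) ht.1
    exact (uAux_hasDeriv this).continuousAt.continuousWithinAt
  · intro t ht
    rw [interior_Icc] at ht
    have ht0 : (0:ℝ) < t := lt_trans (Real.exp_pos _) ht.1
    rw [(uAux_hasDeriv ht0).deriv]
    have := Real.log_lt_log (Real.exp_pos _) ht.1
    rw [Real.log_exp] at this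
    linarith

lemma uAux_one : uAux 1 = 0 := by simp [uAux]

include hb1 hb2 hlog in
lemma uAux_b_neg : uAux b < 0 := by
  have hb0 : (0:ℝ) < b := by linarith
  unfold uAux
  rw [hlog]
  have hbne := hb0.ne'
  have : 1 - b + 2 * b * (2 - 1/b - b) = -1 + 3*b - 2*b^2 := by field_simp; ring
  rw [this]; nlinarith

include hb1 hb2 hlog in
lemma u_neg_on : ∀ x ∈ Ioo b (1:ℝ), uAux x < 0 := by
  intro x hx
  have hs := b_lt_s hb2
  have hs1 : Real.exp (-(1/2) : ℝ) < 1 := Real.exp_lt_one_iff.mpr (by norm_num)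
  rcases le_or_gt x (Real.exp (-(1/2):ℝ)) with hc | hc
  · have h1 := uAux_anti ⟨by linarith, le_of_lt hs⟩ ⟨by linarith [hx.1], hc⟩ hx.1
    have h2 := uAux_b_neg hb1 hb2 hlog
    linarith
  · have h1 := uAux_mono ⟨hc.le, hx.2.le⟩ ⟨hs1.le, le_refl 1⟩ hx.2
    rw [uAux_one] at h1
    linarith

include hb1 hb2 hlog in
lemma Daux_anti : StrictAntiOn Daux (Icc b 1) := by
  apply strictAntiOn_of_deriv_neg (convex_Icc _ _)
  · intro t ht
    have : (0:ℝ) < t := lt_of_lt_of_le (by linarith) ht.1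
    exact (Daux_hasDeriv this).continuousAt.continuousWithinAt
  · intro t ht
    rw [interior_Icc] at ht
    rw [(Daux_hasDeriv (by linarith [ht.1] : (0:ℝ) < t)).deriv]
    exact u_neg_on hb1 hb2 hlog t ht
end

lemma exp_neg4_lt : Real.exp (-4 : ℝ) ≤ 1/5 := by
  rw [Real.exp_neg]
  rw [inv_le_comm₀ (Real.exp_pos 4) (by norm_num)]
  calc (1/5 : ℝ)⁻¹ = 5 := by norm_num
  _ ≤ Real.exp 4 := by have := Real.add_one_le_exp (4:ℝ); linarith

section
variable {b : ℝ} (hb1 : 1/3 < b) (hb2 : b < 23/50) (hlog : Real.log b = 2 - 1/b - b)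

include hb1 hb2 hlog in
lemma alpha_exists : ∃ a : ℝ, 0 < a ∧ a < 1/3 ∧ phiAux b a = 0 := by
  have he4 : (0:ℝ) < Real.exp (-4) := Real.exp_pos _
  have hle : Real.exp (-4 : ℝ) ≤ 1/3 := le_trans exp_neg4_lt (by norm_num)
  have hc : ContinuousOn (phiAux b) (Icc (Real.exp (-4)) (1/3)) := by
    intro x hx
    exact (phi_hasDeriv b (lt_of_lt_of_le he4 hx.1)).continuousAt.continuousWithinAt
  have hiv := intermediate_value_Icc' hle hc
  have h0 : (0:ℝ) ∈ Icc (phiAux b (1/3)) (phiAux b (Real.exp (-4))) :=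
    ⟨(phi_third_neg hb1 hb2 hlog).le, (phi_e4_pos hb1 hb2).le⟩
  obtain ⟨a, ha, hpa⟩ := hiv h0
  refine ⟨a, lt_of_lt_of_le he4 ha.1, lt_of_le_of_ne ha.2 ?_, hpa⟩
  rintro rfl
  exact (phi_third_neg hb1 hb2 hlog).ne hpa

include hb1 hb2 in
lemma uniq_beta (hgb : gAux b = 0) : ∀ y ∈ Ioo (0:ℝ) 1, gAux y = 0 → y = b := by
  intro y hy hgy
  have hbmem : b ∈ Ioc (0:ℝ) gamAux := ⟨by linarith, by linarith [gam_gt]⟩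
  rcases le_or_gt y gamAux with hc | hc
  · exact gAux_anti.injOn ⟨hy.1, hc⟩ hbmem (hgy.trans hgb.symm)
  · exfalso
    have := gAux_mono ⟨hc.le, hy.2.le⟩ ⟨by linarith [gam_lt], le_refl 1⟩ hy.2
    rw [gAux_one, hgy] at this
    exact lt_irrefl 0 this

include hb1 hb2 hlog in
lemma uniq_alpha {a : ℝ} (ha0 : 0 < a) (ha3 : a < 1/3) (hpa : phiAux b a = 0) :
    ∀ x ∈ Ioo (0:ℝ) b, phiAux b x = 0 → x = a := by
  intro x hx hpx
  rcases le_or_gt x (1/3) with hc | hc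
  · exact (phi_anti b).injOn ⟨hx.1, hc⟩ ⟨ha0, ha3.le⟩ (hpx.trans hpa.symm)
  · exfalso
    have h1 := phi_mono b ⟨hc.le, by linarith [hx.2]⟩ ⟨hb1.le, by linarith⟩ hx.2
    have h2 := phi_b_neg hb1 hb2 hlog
    rw [hpx] at h1
    linarith
end

section
variable {b a : ℝ} (hb1 : 1/3 < b) (hb2 : b < 23/50) (hlog : Real.log b = 2 - 1/b - b)
  (hgb : gAux b = 0) (ha0 : 0 < a) (ha3 : a < 1/3) (hpa : phiAux b a = 0)


include hb1 hb2 hgb ha0 ha3 in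
lemma Hab_pos : 0 < Haux a b := by
  have hab : a < b := by linarith
  have hDa : 0 < Daux a := by
    have hne : (1:ℝ)/a ≠ 1 := by
      intro hcontra
      have : a = 1 := by field_simp at hcontra; linarith
      linarith
    have h1 : Real.log (1/a) < 1/a - 1 :=
      Real.log_lt_sub_one_of_pos (by positivity) hne
    rw [one_div, Real.log_inv] at h1
    have h2 : 1 - a + a * Real.log a > 0 := by
      have := mul_lt_mul_of_pos_left h1 ha0
      rw [mul_neg] at this
      have ha' := ha0.ne'
      have ha1 : a * a⁻¹ = 1 := mul_inv_cancel₀ ha'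
      nlinarith [this, ha1]
    unfold Daux; nlinarith
  have h3 : Haux a a < Haux a b :=
    yslice_mono hb1 hb2 hgb ha0 ⟨ha0, hab.le⟩ ⟨by linarith, le_refl b⟩ hab
  rw [Haux_diag] at h3
  linarith

include hb1 hb2 hlog hgb ha0 ha3 hpa in
lemma main_lt : ∀ x y : ℝ, 0 ≤ x → x ≤ y → y ≤ 1 → ¬(x = a ∧ y = b) →
    Haux x y < Haux a b := by
  intro x y hx0 hxy hy1 hne
  have hab : a < b := by linarith
  rcases eq_or_lt_of_le hx0 with hx | hx
  · have h0 : Haux x y = 0 := by rw [← hx]; unfold Haux; ring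
    rw [h0]
    exact Hab_pos hb1 hb2 hgb ha0 ha3
  · -- x > 0
    rcases le_or_gt x b with hxb | hxb
    · -- step 1 : Haux x y ≤ Haux x b, strict unless y = b
      have step1 : Haux x y ≤ Haux x b ∧ (y ≠ b → Haux x y < Haux x b) := by
        rcases lt_trichotomy y b with hc | hc | hc
        · have := yslice_mono hb1 hb2 hgb hx ⟨lt_of_lt_of_le hx hxy, hc.le⟩
            ⟨by linarith, le_refl b⟩ hc
          exact ⟨this.le, fun _ => this⟩
        · exact ⟨le_of_eq (by rw [hc]), fun h => absurd hc h⟩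
        · have := yslice_anti hb1 hb2 hgb hx ⟨le_refl b, by linarith⟩ ⟨hc.le, hy1⟩ hc
          exact ⟨this.le, fun _ => this⟩
      have step2 : Haux x b ≤ Haux a b ∧ (x ≠ a → Haux x b < Haux a b) := by
        rcases lt_trichotomy x a with hc | hc | hc
        · have := psi_mono hb1 hb2 hlog ha0 ha3.le hpa ⟨hx, hc.le⟩ ⟨ha0, le_refl a⟩ hc
          exact ⟨this.le, fun _ => this⟩
        · exact ⟨le_of_eq (by rw [hc]), fun h => absurd hc h⟩
        · have := psi_anti hb1 hb2 hlog ha0 ha3.le hpa ⟨le_refl a, hab.le⟩ ⟨hc.le, hxb⟩ hc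
          exact ⟨this.le, fun _ => this⟩
      rcases eq_or_ne x a with hxa | hxa
      · have hyb : y ≠ b := by
          intro hyb; exact hne ⟨hxa, hyb⟩
        calc Haux x y < Haux x b := step1.2 hyb
        _ ≤ Haux a b := step2.1
      · calc Haux x y ≤ Haux x b := step1.1
        _ < Haux a b := step2.2 hxa
    · -- x > b
      have hyb : b < y := lt_of_lt_of_le hxb hxy
      have s1 : Haux x y ≤ Haux x x := by
        rcases eq_or_lt_of_le hxy with hc | hc
        · rw [← hc]
        · exact (yslice_anti hb1 hb2 hgb hx ⟨hxb.le, by linarith⟩ ⟨hyb.le, hy1⟩ hc).le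
      have s3 : Daux x < Daux b :=
        Daux_anti hb1 hb2 hlog ⟨le_refl b, by linarith⟩ ⟨hxb.le, by linarith⟩ hxb
      have s4 : Haux b b < Haux a b :=
        psi_anti hb1 hb2 hlog ha0 ha3.le hpa ⟨le_refl a, hab.le⟩ ⟨hab.le, le_refl b⟩ hab
      rw [Haux_diag] at s1
      calc Haux x y ≤ Daux x := s1
      _ < Daux b := s3
      _ = Haux b b := (Haux_diag b).symm
      _ < Haux a b := s4
end


theorem stmt_19 :
    let h : ℝ × ℝ → ℝ := fun p =>
      p.1 * (2 - 6 * p.2 + p.2 ^ 2 + 4 * p.1 - p.1 ^ 2 +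
        2 * (1 + p.2) * Real.log p.2 - 2 * Real.log p.1) / 2
    let T : Set (ℝ × ℝ) := {p | 0 ≤ p.1 ∧ p.1 ≤ p.2 ∧ p.2 ≤ 1}
    ∃ α β : ℝ,
      (β ∈ Set.Ioo (0 : ℝ) 1 ∧ -2 + 1 / β + β + Real.log β = 0 ∧
        ∀ y ∈ Set.Ioo (0 : ℝ) 1, -2 + 1 / y + y + Real.log y = 0 → y = β) ∧
      (α ∈ Set.Ioo 0 β ∧
        1 - 1 / β - 2 * β - β ^ 2 / 2 + 4 * α - 3 * α ^ 2 / 2 - Real.log α = 0 ∧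
        ∀ x ∈ Set.Ioo 0 β,
          1 - 1 / β - 2 * β - β ^ 2 / 2 + 4 * x - 3 * x ^ 2 / 2 - Real.log x = 0 → x = α) ∧
      (α, β) ∈ T ∧
      (∀ p ∈ T, h p ≤ h (α, β)) ∧
      (∀ p ∈ T, p ≠ (α, β) → h p < h (α, β)) := by
  intro h T
  obtain ⟨β, hb1, hb2, hgb⟩ := beta_exists
  have hb0 : (0:ℝ) < β := by linarith
  have hlog : Real.log β = 2 - 1/β - β := by
    have h2 := hgb; unfold gAux at h2; linarith
  obtain ⟨α, ha0, ha3, hpa⟩ := alpha_exists hb1 hb2 hlog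
  have hab : α < β := by linarith
  refine ⟨α, β, ⟨⟨hb0, by linarith⟩, hgb, ?_⟩, ⟨⟨ha0, hab⟩, hpa, ?_⟩,
    ⟨ha0.le, hab.le, by linarith⟩, ?_, ?_⟩
  · intro y hy hgy
    exact uniq_beta hb1 hb2 hgb y hy hgy
  · intro x hx hpx
    exact uniq_alpha hb1 hb2 hlog ha0 ha3 hpa x hx hpx
  · intro p hp
    obtain ⟨h1, h2, h3⟩ := hp
    by_cases hpe : p = (α, β)
    · exact le_of_eq (by rw [hpe])
    · show Haux p.1 p.2 ≤ Haux α β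
      refine (main_lt hb1 hb2 hlog hgb ha0 ha3 hpa p.1 p.2 h1 h2 h3 ?_).le
      rintro ⟨hA, hB⟩
      exact hpe (Prod.ext_iff.mpr ⟨hA, hB⟩)
  · intro p hp hpe
    obtain ⟨h1, h2, h3⟩ := hp
    show Haux p.1 p.2 < Haux α β
    refine main_lt hb1 hb2 hlog hgb ha0 ha3 hpa p.1 p.2 h1 h2 h3 ?_
    rintro ⟨hA, hB⟩
    exact hpe (Prod.ext_iff.mpr ⟨hA, hB⟩)
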